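/- Let s, t ∈ ℂ and let 𝐬^z,𝐬^± (parameter s, acting on the first index) and 𝐭^z,𝐭^± (parameter t, acting on the second index) be the undeformed complex-spin Verma operators on the space with basis (|k,l⟩)_{k,l∈ℕ}. Define T = 𝐬⁺𝐭⁺ + 𝐬⁻𝐭⁻ + 2·𝐬^z𝐭^z and V = 𝐬⁺𝐭⁺ − 𝐬⁻𝐭⁻. Then [T,[T,V]] + 2(TV + VT) = 4·( s(s+1) + t(t+1) )·V. -/
import Mathlib


noncomputable section

/-- Finitely supported functions on ℕ×ℕ, with basis `|k,l⟩ = single (k,l) 1`. -/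
abbrev Wsp : Type := (ℕ × ℕ) →₀ ℂ

abbrev EndW : Type := Module.End ℂ Wsp

/-- The endomorphism sending the basis vector `|k,l⟩` to `v (k,l)`. -/
def mkOpW (v : ℕ × ℕ → Wsp) : EndW :=
  Finsupp.lsum ℂ (fun a => LinearMap.toSpanSingleton ℂ Wsp (v a))

/-- `𝐬^z |k,l⟩ = (s−k)|k,l⟩`. -/
def sZu (s : ℂ) : EndW := mkOpW fun q => Finsupp.single q (s - (q.1:ℂ))

/-- `𝐬⁺ |k,l⟩ = k|k−1,l⟩`, with `𝐬⁺|0,l⟩ = 0`. -/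
def sPu : EndW := mkOpW fun q => if q.1 = 0 then 0 else Finsupp.single (q.1 - 1, q.2) ((q.1:ℂ))

/-- `𝐬⁻ |k,l⟩ = (2s−k)|k+1,l⟩`. -/
def sMu (s : ℂ) : EndW := mkOpW fun q => Finsupp.single (q.1 + 1, q.2) (2*s - (q.1:ℂ))

/-- `𝐭^z |k,l⟩ = (t−l)|k,l⟩`. -/
def tZu (t : ℂ) : EndW := mkOpW fun q => Finsupp.single q (t - (q.2:ℂ))

/-- `𝐭⁺ |k,l⟩ = l|k,l−1⟩`, with `𝐭⁺|k,0⟩ = 0`. -/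
def tPu : EndW := mkOpW fun q => if q.2 = 0 then 0 else Finsupp.single (q.1, q.2 - 1) ((q.2:ℂ))

/-- `𝐭⁻ |k,l⟩ = (2t−l)|k,l+1⟩`. -/
def tMu (t : ℂ) : EndW := mkOpW fun q => Finsupp.single (q.1, q.2 + 1) (2*t - (q.2:ℂ))

/-- `T = 𝐬⁺𝐭⁺ + 𝐬⁻𝐭⁻ + 2𝐬^z𝐭^z`. -/
def Tu (s t : ℂ) : EndW := sPu * tPu + sMu s * tMu t + (2:ℂ) • (sZu s * tZu t)

/-- `V = 𝐬⁺𝐭⁺ − 𝐬⁻𝐭⁻`. -/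
def Vu (s t : ℂ) : EndW := sPu * tPu - sMu s * tMu t

lemma mkOpW_single (v : ℕ × ℕ → Wsp) (q : ℕ × ℕ) (c : ℂ) :
    mkOpW v (Finsupp.single q c) = c • v q := by
  simp [mkOpW]

/-- Basis vector `|k,l⟩`. -/
def bas (k l : ℕ) : Wsp := Finsupp.single (k, l) 1

lemma sZu_bas (s : ℂ) (k l : ℕ) : sZu s (bas k l) = (s - (k:ℂ)) • bas k l := by
  simp [sZu, bas, mkOpW_single, Finsupp.smul_single]

lemma sPu_bas (k l : ℕ) : sPu (bas k l) = (k:ℂ) • bas (k-1) l := by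
  rcases k with _ | k <;> simp [sPu, bas, mkOpW_single, Finsupp.smul_single]

lemma sMu_bas (s : ℂ) (k l : ℕ) : sMu s (bas k l) = (2*s - (k:ℂ)) • bas (k+1) l := by
  simp [sMu, bas, mkOpW_single, Finsupp.smul_single]

lemma tZu_bas (t : ℂ) (k l : ℕ) : tZu t (bas k l) = (t - (l:ℂ)) • bas k l := by
  simp [tZu, bas, mkOpW_single, Finsupp.smul_single]

lemma tPu_bas (k l : ℕ) : tPu (bas k l) = (l:ℂ) • bas k (l-1) := by
  rcases l with _ | l <;> simp [tPu, bas, mkOpW_single, Finsupp.smul_single]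

lemma tMu_bas (t : ℂ) (k l : ℕ) : tMu t (bas k l) = (2*t - (l:ℂ)) • bas k (l+1) := by
  simp [tMu, bas, mkOpW_single, Finsupp.smul_single]

lemma endw_ext {f g : EndW} (h : ∀ k l, f (bas k l) = g (bas k l)) : f = g := by
  apply Finsupp.lhom_ext
  intro a b
  have hb : Finsupp.single a b = b • bas a.1 a.2 := by
    simp [bas, Finsupp.smul_single]
  rw [hb, map_smul, map_smul, h]

set_option maxHeartbeats 4000000 in
/-- the algebraic identity
`[T,[T,V]] + 2{T,V} = 4(s(s+1) + t(t+1))·V`. -/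
theorem stmt11 (s t : ℂ) :
    Tu s t * (Tu s t * Vu s t - Vu s t * Tu s t)
        - (Tu s t * Vu s t - Vu s t * Tu s t) * Tu s t
        + (2:ℂ) • (Tu s t * Vu s t + Vu s t * Tu s t)
      = (4 * (s*(s+1) + t*(t+1))) • Vu s t := by
  apply endw_ext
  intro k l
  rcases k with _ | (_ | (_ | k)) <;> rcases l with _ | (_ | (_ | l)) <;>
    · simp only [Tu, Vu, Module.End.mul_apply, LinearMap.add_apply, LinearMap.sub_apply,
        LinearMap.smul_apply, map_add, map_sub, map_smul, smul_zero, map_zero,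
        sZu_bas, sPu_bas, sMu_bas, tZu_bas, tPu_bas, tMu_bas,
        Nat.succ_sub_one, Nat.zero_sub, Nat.cast_zero, zero_smul]
      push_cast
      module

end
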